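/- Let L ≥ 1, let 0 < ε < 1 and 0 < δ < 1, and let α : Fin L → ℂ satisfy ∑_j |α_j|² = 1. Let k be a natural number with k ≥ ((5+√21)/(3ε²))·ln(2L/δ). Then, under the k-fold product of the computational-basis measurement distribution (the probability measure on Fin L assigning probability |α_j|² to outcome j), the probability of the event {ω : Fin k → Fin L | for every j, | √(#{i : ω i = j}/k) − |α_j| | ≤ ε} is at least 1 − δ. In other words, k computational-basis measurements suffice to learn an ε-ℓ∞ estimate of the vector of amplitude magnitudes |α| with success probability at least 1 − δ. -/

import Mathlib

open MeasureTheory Finset Real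

private lemma pi_measure_eq_sum (k L : ℕ) (w : Fin L → ℝ) (A : Set (Fin k → Fin L))
    [DecidablePred (fun ω => ω ∈ A)] :
    Measure.pi (fun _ : Fin k => ∑ j : Fin L, ENNReal.ofReal (w j) • Measure.dirac j) A
      = ∑ ω ∈ Finset.univ.filter (fun ω => ω ∈ A), ∏ i, ENNReal.ofReal (w (ω i)) := by
  set μ : Measure (Fin L) := ∑ j : Fin L, ENNReal.ofReal (w j) • Measure.dirac j with hμ
  have hμx : ∀ x : Fin L, μ {x} = ENNReal.ofReal (w x) := by
    intro x
    simp [hμ, Measure.coe_finset_sum, Measure.smul_apply,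
      Measure.dirac_apply' _ (measurableSet_singleton x), Set.indicator_apply]
  haveI : IsFiniteMeasure μ := by
    constructor
    rw [show (Set.univ : Set (Fin L)) = ⋃ x ∈ (Finset.univ : Finset (Fin L)),
      ({x} : Set (Fin L)) by ext; simp]
    rw [measure_biUnion_finset]
    · simp only [hμx]
      exact ENNReal.sum_lt_top.mpr fun _ _ => ENNReal.ofReal_lt_top
    · intro a _ b _ hab; simp [Function.onFun, Set.disjoint_singleton, hab]
    · intro b _; exact measurableSet_singleton b
  have hA : A = ⋃ ω ∈ (Finset.univ.filter (fun ω => ω ∈ A)), ({ω} : Set (Fin k → Fin L)) := by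
    ext ω; simp
  conv_lhs => rw [hA]
  rw [measure_biUnion_finset]
  · refine Finset.sum_congr rfl fun ω _ => ?_
    have hsing : ({ω} : Set (Fin k → Fin L)) = Set.univ.pi (fun i => {ω i}) := by
      ext x; simp [funext_iff, Set.mem_pi]
    rw [hsing, Measure.pi_pi]
    exact Finset.prod_congr rfl fun i _ => hμx (ω i)
  · intro a _ b _ hab
    simp [Function.onFun, Set.disjoint_singleton, hab]
  · intro b _; exact measurableSet_singleton b

private lemma ite_nonneg_aux {P : Prop} [Decidable P] {x : ℝ} (hx : 0 ≤ x) :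
    0 ≤ if P then x else 0 := by
  split
  · exact hx
  · exact le_refl 0

private lemma sum_prod_eq_pow (k L : ℕ) (f : Fin L → ℝ) :
    ∑ ω : Fin k → Fin L, ∏ i, f (ω i) = (∑ x, f x) ^ k := by
  have := Finset.prod_univ_sum (fun _ : Fin k => (Finset.univ : Finset (Fin L)))
    (fun _ x => f x)
  simp only [Fintype.piFinset_univ] at this
  rw [← this, Finset.prod_const, Finset.card_univ, Fintype.card_fin]

open scoped Classical in
private lemma chernoff_core (k L : ℕ) (w : Fin L → ℝ) (hw0 : ∀ x, 0 ≤ w x)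
    (hw1 : ∑ x, w x = 1) (j : Fin L) (u a : ℝ) :
    ∑ ω ∈ Finset.univ.filter (fun ω : Fin k → Fin L =>
        u * a ≤ u * ((Finset.univ.filter fun i => ω i = j).card : ℝ)), ∏ i, w (ω i)
      ≤ rexp (-(u*a)) * (1 + w j * (rexp u - 1)) ^ k := by
  have hW : ∀ ω : Fin k → Fin L, 0 ≤ ∏ i, w (ω i) :=
    fun ω => Finset.prod_nonneg fun i _ => hw0 (ω i)
  have hcnt : ∀ ω : Fin k → Fin L,
      (((Finset.univ.filter fun i => ω i = j).card : ℝ))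
        = ∑ i, (if ω i = j then (1:ℝ) else 0) := by
    intro ω
    rw [Finset.card_filter]
    push_cast
    exact Finset.sum_congr rfl fun i _ => by split <;> simp
  have step2 : ∀ ω : Fin k → Fin L,
      rexp (u * ((Finset.univ.filter fun i => ω i = j).card : ℝ) - u*a) * ∏ i, w (ω i)
        = rexp (-(u*a)) * ∏ i, (w (ω i) * rexp (u * (if ω i = j then (1:ℝ) else 0))) := by
    intro ω
    rw [Finset.prod_mul_distrib, ← Real.exp_sum, ← Finset.mul_sum, ← hcnt ω,
      show u * ((Finset.univ.filter fun i => ω i = j).card : ℝ) - u*a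
        = -(u*a) + u * ((Finset.univ.filter fun i => ω i = j).card : ℝ) by ring,
      Real.exp_add]
    ring
  calc ∑ ω ∈ Finset.univ.filter (fun ω : Fin k → Fin L =>
        u * a ≤ u * ((Finset.univ.filter fun i => ω i = j).card : ℝ)), ∏ i, w (ω i)
      ≤ ∑ ω ∈ Finset.univ.filter (fun ω : Fin k → Fin L =>
        u * a ≤ u * ((Finset.univ.filter fun i => ω i = j).card : ℝ)),
          rexp (u * ((Finset.univ.filter fun i => ω i = j).card : ℝ) - u*a) * ∏ i, w (ω i) := by
        refine Finset.sum_le_sum fun ω hω => ?_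
        have h := (Finset.mem_filter.mp hω).2
        exact le_mul_of_one_le_left (hW ω) (Real.one_le_exp (by linarith))
    _ ≤ ∑ ω : Fin k → Fin L,
          rexp (u * ((Finset.univ.filter fun i => ω i = j).card : ℝ) - u*a) * ∏ i, w (ω i) := by
        refine Finset.sum_le_sum_of_subset_of_nonneg (Finset.filter_subset _ _) fun ω _ _ =>
          mul_nonneg (Real.exp_pos _).le (hW ω)
    _ = rexp (-(u*a)) * ∑ ω : Fin k → Fin L,
          ∏ i, (w (ω i) * rexp (u * (if ω i = j then (1:ℝ) else 0))) := by
        rw [Finset.mul_sum]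
        exact Finset.sum_congr rfl fun ω _ => step2 ω
    _ = rexp (-(u*a)) * (∑ x, w x * rexp (u * (if x = j then (1:ℝ) else 0))) ^ k := by
        congr 1
        exact sum_prod_eq_pow k L (fun x => w x * rexp (u * (if x = j then (1:ℝ) else 0)))
    _ = rexp (-(u*a)) * (1 + w j * (rexp u - 1)) ^ k := by
        congr 1
        congr 1
        have : ∀ x : Fin L, w x * rexp (u * (if x = j then (1:ℝ) else 0))
            = w x + (if x = j then w j * (rexp u - 1) else 0) := by
          intro x
          by_cases h : x = j
          · subst h; simp; ring
          · simp [h]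
        simp_rw [this, Finset.sum_add_distrib, hw1, Finset.sum_ite_eq' Finset.univ j]
        simp

open scoped Classical in
private lemma tail_bound (k L : ℕ) (w : Fin L → ℝ) (hw0 : ∀ x, 0 ≤ w x)
    (hw1 : ∑ x, w x = 1) (j : Fin L) (u a g : ℝ) (hg : rexp u - 1 ≤ g) :
    ∑ ω ∈ Finset.univ.filter (fun ω : Fin k → Fin L =>
        u * a ≤ u * ((Finset.univ.filter fun i => ω i = j).card : ℝ)), ∏ i, w (ω i)
      ≤ rexp ((k : ℝ) * (w j * g) - u * a) := by
  refine (chernoff_core k L w hw0 hw1 j u a).trans ?_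
  have hq0 : 0 ≤ w j := hw0 j
  have hq1 : w j ≤ 1 := hw1 ▸ Finset.single_le_sum (fun x _ => hw0 x) (Finset.mem_univ j)
  have hbase : (1 + w j * (rexp u - 1)) ^ k ≤ rexp (w j * g) ^ k := by
    refine pow_le_pow_left₀ ?_ ?_ k
    · nlinarith [Real.exp_pos u]
    · refine le_trans ?_ (Real.add_one_le_exp (w j * g))
      nlinarith
  calc rexp (-(u*a)) * (1 + w j * (rexp u - 1)) ^ k
      ≤ rexp (-(u*a)) * rexp (w j * g) ^ k :=
        mul_le_mul_of_nonneg_left hbase (Real.exp_pos _).le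
    _ = rexp ((k : ℝ) * (w j * g) - u * a) := by
        rw [← Real.exp_nat_mul, ← Real.exp_add]; ring_nf

open scoped Classical in
private lemma tail_up (k L : ℕ) (w : Fin L → ℝ) (hw0 : ∀ x, 0 ≤ w x) (hw1 : ∑ x, w x = 1)
    (j : Fin L) (ε aj : ℝ) (hε : 0 < ε) (haj0 : 0 ≤ aj) (haj : w j = aj ^ 2) :
    ∑ ω ∈ Finset.univ.filter (fun ω : Fin k → Fin L =>
        (k : ℝ) * (w j + (2 * aj * ε + ε ^ 2)) ≤ ((Finset.univ.filter fun i => ω i = j).card : ℝ)),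
      ∏ i, w (ω i)
      ≤ rexp (-((k : ℝ) * ε ^ 2 / 2)) := by
  have hW : ∀ ω : Fin k → Fin L, 0 ≤ ∏ i, w (ω i) :=
    fun ω => Finset.prod_nonneg fun i _ => hw0 (ω i)
  have hk0 : (0:ℝ) ≤ (k:ℝ) := Nat.cast_nonneg k
  have hp0 : 0 ≤ w j := hw0 j
  have hs2 : ε ^ 2 ≤ 2 * aj * ε + ε ^ 2 := by nlinarith
  have hs0 : (0:ℝ) < 2 * aj * ε + ε ^ 2 := by nlinarith
  have hsub : ∀ u : ℝ, 0 ≤ u → ∀ g : ℝ, rexp u - 1 ≤ g →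
      ∑ ω ∈ Finset.univ.filter (fun ω : Fin k → Fin L =>
        (k : ℝ) * (w j + (2 * aj * ε + ε ^ 2)) ≤ ((Finset.univ.filter fun i => ω i = j).card : ℝ)),
        ∏ i, w (ω i)
      ≤ rexp ((k : ℝ) * (w j * g) - u * ((k : ℝ) * (w j + (2 * aj * ε + ε ^ 2)))) := by
    intro u hu g hg
    refine le_trans (le_trans ?_
      (Finset.sum_le_sum_of_subset_of_nonneg (Finset.monotone_filter_right _
        (fun ω _ hω => mul_le_mul_of_nonneg_left hω hu)) fun ω _ _ => hW ω))
      (tail_bound k L w hw0 hw1 j u ((k : ℝ) * (w j + (2 * aj * ε + ε ^ 2))) g hg)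
    exact le_refl _
  by_cases hcase : 2 * aj * ε + ε ^ 2 ≤ 2 * w j
  · have hppos : 0 < w j := by nlinarith
    have hu0 : 0 ≤ (2 * aj * ε + ε ^ 2) / (4 * w j) := by positivity
    set u : ℝ := (2 * aj * ε + ε ^ 2) / (4 * w j) with hu
    have hu2 : u ≤ 1/2 := by rw [hu, div_le_iff₀ (by linarith)]; linarith
    have hg : rexp u - 1 ≤ u + 2 * u ^ 2 := by
      have h1 : 1 - u ≤ rexp (-u) := by linarith [Real.add_one_le_exp (-u)]
      have h2 : rexp u * (1 - u) ≤ 1 := by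
        calc rexp u * (1 - u) ≤ rexp u * rexp (-u) :=
              mul_le_mul_of_nonneg_left h1 (Real.exp_pos u).le
          _ = 1 := by rw [← Real.exp_add]; simp
      nlinarith [Real.exp_pos u]
    refine (hsub u hu0 _ hg).trans (Real.exp_le_exp.mpr ?_)
    have hexp : (k : ℝ) * (w j * (u + 2 * u ^ 2))
          - u * ((k : ℝ) * (w j + (2 * aj * ε + ε ^ 2)))
        = -((k:ℝ) * ((2 * aj * ε + ε ^ 2)^2/(8 * w j))) := by
      rw [hu]; field_simp; ring
    rw [hexp]
    have : ε ^ 2 / 2 ≤ (2 * aj * ε + ε ^ 2) ^ 2 / (8 * w j) := by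
      rw [div_le_div_iff₀ (by norm_num) (by linarith)]
      nlinarith [sq_nonneg ε, sq_nonneg aj]
    nlinarith
  · push_neg at hcase
    have hlog1 : 1 ≤ Real.log 3 := by
      rw [Real.le_log_iff_exp_le (by norm_num)]
      linarith [Real.exp_one_lt_d9]
    have hg : rexp (Real.log 3) - 1 ≤ (2:ℝ) := by
      rw [Real.exp_log (by norm_num)]; norm_num
    refine (hsub (Real.log 3) (by linarith) 2 hg).trans (Real.exp_le_exp.mpr ?_)
    have ha0 : (0:ℝ) ≤ (k : ℝ) * (w j + (2 * aj * ε + ε ^ 2)) := by positivity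
    nlinarith

open scoped Classical in
private lemma tail_low (k L : ℕ) (w : Fin L → ℝ) (hw0 : ∀ x, 0 ≤ w x) (hw1 : ∑ x, w x = 1)
    (j : Fin L) (ε aj : ℝ) (hε : 0 < ε) (hεa : ε < aj) (haj : w j = aj ^ 2) :
    ∑ ω ∈ Finset.univ.filter (fun ω : Fin k → Fin L =>
        ((Finset.univ.filter fun i => ω i = j).card : ℝ) ≤ (k : ℝ) * (w j - (2 * aj * ε - ε ^ 2))),
      ∏ i, w (ω i)
      ≤ rexp (-((k : ℝ) * ε ^ 2 / 2)) := by
  have hW : ∀ ω : Fin k → Fin L, 0 ≤ ∏ i, w (ω i) :=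
    fun ω => Finset.prod_nonneg fun i _ => hw0 (ω i)
  have hk0 : (0:ℝ) ≤ (k:ℝ) := Nat.cast_nonneg k
  have hs0 : (0:ℝ) < 2 * aj * ε - ε ^ 2 := by nlinarith
  have hps : 2 * aj * ε - ε ^ 2 ≤ w j := by rw [haj]; nlinarith [sq_nonneg (aj - ε)]
  have hppos : 0 < w j := lt_of_lt_of_le hs0 hps
  have hv0 : 0 ≤ (2 * aj * ε - ε ^ 2) / w j := by positivity
  set v : ℝ := (2 * aj * ε - ε ^ 2) / w j with hv
  have hg : rexp (-v) - 1 ≤ v ^ 2 / 2 - v := by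
    have h1 : 1 + v + v^2/2 ≤ rexp v := by
      have := Real.sum_le_exp_of_nonneg hv0 3
      simp [Finset.sum_range_succ, Nat.factorial] at this
      linarith
    have hpos : (0:ℝ) < 1 + v + v^2/2 := by nlinarith
    have h2 : rexp (-v) * (1 + v + v^2/2) ≤ 1 := by
      calc rexp (-v) * (1 + v + v^2/2) ≤ rexp (-v) * rexp v :=
            mul_le_mul_of_nonneg_left h1 (Real.exp_pos _).le
        _ = 1 := by rw [← Real.exp_add]; simp
    nlinarith [Real.exp_pos (-v), sq_nonneg (v^2)]
  have hstep : ∑ ω ∈ Finset.univ.filter (fun ω : Fin k → Fin L =>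
        ((Finset.univ.filter fun i => ω i = j).card : ℝ)
          ≤ (k : ℝ) * (w j - (2 * aj * ε - ε ^ 2))), ∏ i, w (ω i)
      ≤ rexp ((k : ℝ) * (w j * (v ^ 2 / 2 - v))
          - (-v) * ((k : ℝ) * (w j - (2 * aj * ε - ε ^ 2)))) := by
    refine le_trans (Finset.sum_le_sum_of_subset_of_nonneg (Finset.monotone_filter_right _
        (fun ω _ hω => ?_)) fun ω _ _ => hW ω)
      (tail_bound k L w hw0 hw1 j (-v)
        ((k : ℝ) * (w j - (2 * aj * ε - ε ^ 2))) (v ^ 2 / 2 - v) hg)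
    nlinarith
  refine hstep.trans (Real.exp_le_exp.mpr ?_)
  have hexp : (k : ℝ) * (w j * (v ^ 2 / 2 - v))
        - (-v) * ((k : ℝ) * (w j - (2 * aj * ε - ε ^ 2)))
      = -((k:ℝ) * ((2 * aj * ε - ε ^ 2)^2/(2 * w j))) := by
    rw [hv]; field_simp; ring
  rw [hexp]
  have : ε ^ 2 / 2 ≤ (2 * aj * ε - ε ^ 2) ^ 2 / (2 * w j) := by
    rw [div_le_div_iff₀ (by norm_num) (by linarith), haj]
    nlinarith [mul_nonneg (mul_nonneg (sq_nonneg ε) (by linarith : (0:ℝ) ≤ 3*aj - ε))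
      (by linarith : (0:ℝ) ≤ aj - ε)]
  nlinarith

/-- k computational-basis measurements suffice to learn an ε-ℓ∞ estimate of the
amplitude magnitudes of a pure state, with success probability at least 1 − δ. -/
theorem tomography_linfty_estimate
    (L : ℕ) (hL : 1 ≤ L) (ε δ : ℝ) (hε0 : 0 < ε) (hε1 : ε < 1)
    (hδ0 : 0 < δ) (hδ1 : δ < 1)
    (α : Fin L → ℂ) (hα : ∑ j, ‖α j‖ ^ 2 = 1)
    (k : ℕ) (hk : ((5 + Real.sqrt 21) / (3 * ε ^ 2)) * Real.log (2 * L / δ) ≤ k) :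
    ENNReal.ofReal (1 - δ) ≤
      Measure.pi (fun _ : Fin k =>
          ∑ j : Fin L, ENNReal.ofReal (‖α j‖ ^ 2) • Measure.dirac j)
        {ω : Fin k → Fin L | ∀ j : Fin L,
          |Real.sqrt (((Finset.univ.filter fun i => ω i = j).card : ℝ) / k)
            - ‖α j‖| ≤ ε} := by
  classical
  set w : Fin L → ℝ := fun x => ‖α x‖ ^ 2 with hwdef
  have hw0 : ∀ x, 0 ≤ w x := fun x => pow_nonneg (norm_nonneg _) 2
  have hw1 : ∑ x, w x = 1 := hα
  have hW : ∀ ω : Fin k → Fin L, 0 ≤ ∏ i, w (ω i) :=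
    fun ω => Finset.prod_nonneg fun i _ => hw0 (ω i)
  have hLpos : (0:ℝ) < L := by exact_mod_cast hL
  have hL1 : (1:ℝ) ≤ L := by exact_mod_cast hL
  -- k is positive
  have h2L : (1:ℝ) < 2 * L / δ := by
    rw [lt_div_iff₀ hδ0]; linarith
  have hlogpos : 0 < Real.log (2 * L / δ) := Real.log_pos h2L
  have hsqrt1 : (1:ℝ) ≤ Real.sqrt 21 := by
    rw [show (1:ℝ) = Real.sqrt 1 by simp]
    exact Real.sqrt_le_sqrt (by norm_num)
  have hsqrt0 : (0:ℝ) ≤ Real.sqrt 21 := by linarith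
  have hk0 : (0:ℝ) < k := by
    have hcpos : 0 < (5 + Real.sqrt 21) / (3 * ε ^ 2) := by positivity
    calc (0:ℝ) < (5 + Real.sqrt 21) / (3 * ε ^ 2) * Real.log (2 * L / δ) := by positivity
      _ ≤ k := hk
  -- the tail probability bound
  have htail : rexp (-((k:ℝ) * ε ^ 2 / 2)) ≤ δ / (2 * L) := by
    have h1 : Real.log (2 * L / δ) ≤ (k:ℝ) * ε ^ 2 * (3 / (5 + Real.sqrt 21)) := by
      have h2 : Real.log (2 * L / δ) * ((5 + Real.sqrt 21) / (3 * ε ^ 2))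
            * ((3 * ε ^ 2) / (5 + Real.sqrt 21))
          = Real.log (2 * L / δ) := by
        field_simp
      calc Real.log (2 * L / δ) = Real.log (2 * L / δ) * ((5 + Real.sqrt 21) / (3 * ε ^ 2))
            * ((3 * ε ^ 2) / (5 + Real.sqrt 21)) := h2.symm
        _ ≤ (k:ℝ) * ((3 * ε ^ 2) / (5 + Real.sqrt 21)) := by
            refine mul_le_mul_of_nonneg_right ?_ (by positivity)
            rw [mul_comm]; exact hk
        _ = (k:ℝ) * ε ^ 2 * (3 / (5 + Real.sqrt 21)) := by ring
    have h3 : (3 : ℝ) / (5 + Real.sqrt 21) ≤ 1 / 2 := by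
      rw [div_le_div_iff₀ (by linarith) (by norm_num)]
      linarith
    have h4 : Real.log (2 * L / δ) ≤ (k:ℝ) * ε ^ 2 / 2 := by
      have := mul_le_mul_of_nonneg_left h3 (by positivity : (0:ℝ) ≤ (k:ℝ) * ε ^ 2)
      calc Real.log (2 * L / δ) ≤ (k:ℝ) * ε ^ 2 * (3 / (5 + Real.sqrt 21)) := h1
        _ ≤ (k:ℝ) * ε ^ 2 * (1/2) := this
        _ = (k:ℝ) * ε ^ 2 / 2 := by ring
    calc rexp (-((k:ℝ) * ε ^ 2 / 2)) ≤ rexp (-Real.log (2 * L / δ)) :=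
          Real.exp_le_exp.mpr (by linarith)
      _ = δ / (2 * L) := by
          rw [Real.exp_neg, Real.exp_log (by positivity), inv_div]
  -- rewrite the measure as a finite sum
  rw [pi_measure_eq_sum k L w]
  have hconv : ∑ ω ∈ Finset.univ.filter (fun ω : Fin k → Fin L =>
        ω ∈ {ω : Fin k → Fin L | ∀ j : Fin L,
          |Real.sqrt (((Finset.univ.filter fun i => ω i = j).card : ℝ) / k)
            - ‖α j‖| ≤ ε}), ∏ i, ENNReal.ofReal (w (ω i))
      = ENNReal.ofReal (∑ ω ∈ Finset.univ.filter (fun ω : Fin k → Fin L =>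
        ω ∈ {ω : Fin k → Fin L | ∀ j : Fin L,
          |Real.sqrt (((Finset.univ.filter fun i => ω i = j).card : ℝ) / k)
            - ‖α j‖| ≤ ε}), ∏ i, w (ω i)) := by
    rw [ENNReal.ofReal_sum_of_nonneg fun ω _ => hW ω]
    exact Finset.sum_congr rfl fun ω _ =>
      (ENNReal.ofReal_prod_of_nonneg fun i _ => hw0 (ω i)).symm
  rw [hconv]
  refine ENNReal.ofReal_le_ofReal ?_
  -- now a purely real statement
  have htot : ∑ ω : Fin k → Fin L, ∏ i, w (ω i) = 1 := by
    rw [sum_prod_eq_pow, hw1, one_pow]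
  have hsplit := Finset.sum_filter_add_sum_filter_not Finset.univ
    (fun ω : Fin k → Fin L => ω ∈ {ω : Fin k → Fin L | ∀ j : Fin L,
          |Real.sqrt (((Finset.univ.filter fun i => ω i = j).card : ℝ) / k)
            - ‖α j‖| ≤ ε}) (fun ω => ∏ i, w (ω i))
  rw [htot] at hsplit
  -- bad events
  set predU : Fin L → (Fin k → Fin L) → Prop := fun j ω =>
    (k : ℝ) * (w j + (2 * ‖α j‖ * ε + ε ^ 2))
      ≤ ((Finset.univ.filter fun i => ω i = j).card : ℝ) with hpredU
  set predL : Fin L → (Fin k → Fin L) → Prop := fun j ω =>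
    ε < ‖α j‖ ∧
      ((Finset.univ.filter fun i => ω i = j).card : ℝ)
        ≤ (k : ℝ) * (w j - (2 * ‖α j‖ * ε - ε ^ 2)) with hpredL
  have hbad : ∑ ω ∈ Finset.univ.filter (fun ω : Fin k → Fin L =>
      ¬ (ω ∈ {ω : Fin k → Fin L | ∀ j : Fin L,
          |Real.sqrt (((Finset.univ.filter fun i => ω i = j).card : ℝ) / k)
            - ‖α j‖| ≤ ε})), ∏ i, w (ω i) ≤ δ := by
    have hterm : ∀ ω ∈ Finset.univ.filter (fun ω : Fin k → Fin L =>
        ¬ (ω ∈ {ω : Fin k → Fin L | ∀ j : Fin L,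
          |Real.sqrt (((Finset.univ.filter fun i => ω i = j).card : ℝ) / k)
            - ‖α j‖| ≤ ε})),
        ∏ i, w (ω i) ≤ ∑ j : Fin L,
          ((if predU j ω then ∏ i, w (ω i) else 0) + (if predL j ω then ∏ i, w (ω i) else 0)) := by
      intro ω hω
      have hω' := (Finset.mem_filter.mp hω).2
      simp only [Set.mem_setOf_eq, not_forall, not_le] at hω'
      obtain ⟨j₀, hj₀⟩ := hω'
      have hc0 : (0:ℝ) ≤ ((Finset.univ.filter fun i => ω i = j₀).card : ℝ) / k := by positivity
      have hor : predU j₀ ω ∨ predL j₀ ω := by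
        rcases lt_abs.mp hj₀ with h | h
        · left
          have h1 : ‖α j₀‖ + ε
              < Real.sqrt (((Finset.univ.filter fun i => ω i = j₀).card : ℝ) / k) := by
            linarith
          have h2 : (‖α j₀‖ + ε) ^ 2
              < ((Finset.univ.filter fun i => ω i = j₀).card : ℝ) / k := by
            calc (‖α j₀‖ + ε) ^ 2
                < (Real.sqrt (((Finset.univ.filter fun i => ω i = j₀).card : ℝ) / k)) ^ 2 :=
                  pow_lt_pow_left₀ h1 (by positivity) two_ne_zero
              _ = ((Finset.univ.filter fun i => ω i = j₀).card : ℝ) / k := Real.sq_sqrt hc0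
          rw [lt_div_iff₀ hk0] at h2
          show (k : ℝ) * (w j₀ + (2 * ‖α j₀‖ * ε + ε ^ 2))
            ≤ ((Finset.univ.filter fun i => ω i = j₀).card : ℝ)
          have hwj : w j₀ = ‖α j₀‖ ^ 2 := rfl
          nlinarith
        · right
          have hεa : ε < ‖α j₀‖ := by
            have := Real.sqrt_nonneg (((Finset.univ.filter fun i => ω i = j₀).card : ℝ) / k)
            linarith
          refine ⟨hεa, ?_⟩
          have h1 : Real.sqrt (((Finset.univ.filter fun i => ω i = j₀).card : ℝ) / k)
              < ‖α j₀‖ - ε := by linarith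
          have h2 : ((Finset.univ.filter fun i => ω i = j₀).card : ℝ) / k
              < (‖α j₀‖ - ε) ^ 2 := by
            calc ((Finset.univ.filter fun i => ω i = j₀).card : ℝ) / k
                = (Real.sqrt (((Finset.univ.filter fun i => ω i = j₀).card : ℝ) / k)) ^ 2 :=
                  (Real.sq_sqrt hc0).symm
              _ < (‖α j₀‖ - ε) ^ 2 :=
                  pow_lt_pow_left₀ h1 (Real.sqrt_nonneg _) two_ne_zero
          rw [div_lt_iff₀ hk0] at h2
          have hwj : w j₀ = ‖α j₀‖ ^ 2 := rfl
          nlinarith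
      refine Finset.single_le_sum (f := fun j =>
          (if predU j ω then ∏ i, w (ω i) else 0) + (if predL j ω then ∏ i, w (ω i) else 0))
        (fun j _ => add_nonneg (ite_nonneg_aux (hW ω)) (ite_nonneg_aux (hW ω)))
        (Finset.mem_univ j₀) |>.trans' ?_
      rcases hor with h | h
      · rw [if_pos h]
        have : (0:ℝ) ≤ if predL j₀ ω then ∏ i, w (ω i) else 0 := ite_nonneg_aux (hW ω)
        linarith
      · rw [if_pos h]
        have : (0:ℝ) ≤ if predU j₀ ω then ∏ i, w (ω i) else 0 := ite_nonneg_aux (hW ω)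
        linarith
    calc ∑ ω ∈ Finset.univ.filter (fun ω : Fin k → Fin L =>
          ¬ (ω ∈ {ω : Fin k → Fin L | ∀ j : Fin L,
            |Real.sqrt (((Finset.univ.filter fun i => ω i = j).card : ℝ) / k)
              - ‖α j‖| ≤ ε})), ∏ i, w (ω i)
        ≤ ∑ ω ∈ Finset.univ.filter (fun ω : Fin k → Fin L =>
          ¬ (ω ∈ {ω : Fin k → Fin L | ∀ j : Fin L,
            |Real.sqrt (((Finset.univ.filter fun i => ω i = j).card : ℝ) / k)
              - ‖α j‖| ≤ ε})), ∑ j : Fin L,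
          ((if predU j ω then ∏ i, w (ω i) else 0) + (if predL j ω then ∏ i, w (ω i) else 0)) :=
          Finset.sum_le_sum hterm
      _ ≤ ∑ ω : Fin k → Fin L, ∑ j : Fin L,
          ((if predU j ω then ∏ i, w (ω i) else 0) + (if predL j ω then ∏ i, w (ω i) else 0)) := by
          refine Finset.sum_le_sum_of_subset_of_nonneg (Finset.filter_subset _ _)
            fun ω _ _ => Finset.sum_nonneg fun j _ =>
              add_nonneg (ite_nonneg_aux (hW ω)) (ite_nonneg_aux (hW ω))
      _ = ∑ j : Fin L, ∑ ω : Fin k → Fin L,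
          ((if predU j ω then ∏ i, w (ω i) else 0) + (if predL j ω then ∏ i, w (ω i) else 0)) :=
          Finset.sum_comm
      _ = ∑ j : Fin L,
          ((∑ ω ∈ Finset.univ.filter (predU j), ∏ i, w (ω i))
            + (∑ ω ∈ Finset.univ.filter (predL j), ∏ i, w (ω i))) := by
          refine Finset.sum_congr rfl fun j _ => ?_
          rw [Finset.sum_add_distrib, Finset.sum_filter, Finset.sum_filter]
      _ ≤ ∑ j : Fin L, (δ / (2 * L) + δ / (2 * L)) := by
          refine Finset.sum_le_sum fun j _ => ?_
          have hU : ∑ ω ∈ Finset.univ.filter (predU j), ∏ i, w (ω i) ≤ δ / (2 * L) :=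
            (tail_up k L w hw0 hw1 j ε (‖α j‖) hε0 (norm_nonneg _) rfl).trans
              htail
          have hLo : ∑ ω ∈ Finset.univ.filter (predL j), ∏ i, w (ω i) ≤ δ / (2 * L) := by
            by_cases hεa : ε < ‖α j‖
            · have heq : Finset.univ.filter (predL j)
                  = Finset.univ.filter (fun ω : Fin k → Fin L =>
                    ((Finset.univ.filter fun i => ω i = j).card : ℝ)
                      ≤ (k : ℝ) * (w j - (2 * ‖α j‖ * ε - ε ^ 2))) := by
                refine Finset.filter_congr fun ω _ => ?_
                simp [hpredL, hεa]
              rw [heq]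
              exact (tail_low k L w hw0 hw1 j ε (‖α j‖) hε0 hεa rfl).trans htail
            · have heq : Finset.univ.filter (predL j) = (∅ : Finset (Fin k → Fin L)) := by
                refine Finset.filter_false_of_mem fun ω _ => ?_
                exact fun h => hεa h.1
              rw [heq, Finset.sum_empty]
              positivity
          linarith
      _ = δ := by
          rw [Finset.sum_const, Finset.card_univ, Fintype.card_fin, nsmul_eq_mul]
          field_simp
          ring
  linarith
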